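/- Let n ≥ 1, let l₁, …, lₙ ≥ 1 be integers with L = ∑_j l_j, let m₁, …, mₙ be negative integers, and set E = n + ∑_j m_j − (n+1)·L. There exists a constant K ∈ ℂ such that for every τ ∈ ℂ with τ ≠ 0 and every ρ with 0 < ρ < |τ|, one has (2πi)^{−n} ∯_{|z_j|=ρ} (∏_{j=1}^{n} z_j^{m_j}) / (∏_{j=1}^{n} (z_j·∏_{k=1}^{n} z_k − τ^{n+1})^{l_j}) dz = K·τ^{E} (with τ^E the integer power, E possibly negative). That is, the residue at 0 of the form g_m(z) = (∏ z_j^{m_j} / ∏_j (z_j ∏_k z_k − T)^{l_j}) dz with T = τ^{n+1} is a fixed constant times T^{−L + (n + ∑ m_j)/(n+1)}. -/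

import Mathlib

open Complex MeasureTheory

namespace Res4

open Set Function

noncomputable section

/-! ### One-dimensional lemmas -/

/-- Rotation invariance of the circle integral around `0`. -/
lemma circleIntegral_rotate (q : ℂ → ℂ) (r : ℝ) (d : ℂ) (hd : ‖d‖ = 1) :
    (∮ z in C((0:ℂ), r), d * q (d * z)) = ∮ z in C((0:ℂ), r), q z := by
  have hd0 : d = Complex.exp ((d.arg : ℂ) * Complex.I) := by
    conv_lhs => rw [← Complex.norm_mul_exp_arg_mul_I d]
    rw [hd]; simp
  set α : ℝ := d.arg
  have hmul : ∀ θ : ℝ, d * circleMap 0 r θ = circleMap 0 r (θ + α) := by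
    intro θ
    simp only [circleMap_zero]
    rw [hd0, mul_comm, mul_assoc, ← Complex.exp_add]
    push_cast
    ring_nf
  have hp : Function.Periodic (fun θ => (circleMap 0 r θ * Complex.I) • q (circleMap 0 r θ))
      (2 * Real.pi) :=
    ((periodic_circleMap 0 r).comp fun w => (w * Complex.I) • q w)
  calc (∮ z in C((0:ℂ), r), d * q (d * z))
      = ∫ θ in (0:ℝ)..2 * Real.pi,
          (circleMap 0 r (θ + α) * Complex.I) • q (circleMap 0 r (θ + α)) := by
        simp only [circleIntegral, deriv_circleMap]
        refine intervalIntegral.integral_congr fun θ _ => ?_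
        rw [← hmul θ]
        simp only [smul_eq_mul]
        ring
    _ = ∫ θ in α..(α + 2 * Real.pi),
          (circleMap 0 r θ * Complex.I) • q (circleMap 0 r θ) := by
        have h := intervalIntegral.integral_comp_add_right (a := (0:ℝ)) (b := 2 * Real.pi)
          (fun θ => (circleMap 0 r θ * Complex.I) • q (circleMap 0 r θ)) α
        rw [h, zero_add, add_comm (2 * Real.pi) α]
    _ = ∮ z in C((0:ℂ), r), q z := by
        rw [hp.intervalIntegral_add_eq α 0]
        simp [circleIntegral, deriv_circleMap]

/-! ### The integrand -/

variable {n : ℕ}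

/-- The integrand of the torus integral. -/
def fI (l : Fin n → ℕ) (m : Fin n → ℤ) (τ : ℂ) (z : Fin n → ℂ) : ℂ :=
  (∏ j, z j ^ m j) / (∏ j, (z j * (∏ k, z k) - τ ^ (n + 1)) ^ (l j))

lemma abs_lt_den_ne (τ : ℂ) (hτ : τ ≠ 0) (z : Fin n → ℂ)
    (hz : ∀ k, ‖z k‖ < ‖τ‖) (j : Fin n) :
    z j * (∏ k, z k) - τ ^ (n + 1) ≠ 0 := by
  have h1 : ‖z j * ∏ k, z k‖ < ‖τ‖ ^ (n + 1) := by
    rw [norm_mul, norm_prod]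
    have h2 : (∏ k, ‖z k‖) ≤ ‖τ‖ ^ n := by
      calc (∏ k, ‖z k‖) ≤ ∏ _k : Fin n, ‖τ‖ :=
            Finset.prod_le_prod (fun k _ => norm_nonneg _) (fun k _ => (hz k).le)
        _ = ‖τ‖ ^ n := by simp
    calc ‖z j‖ * ∏ k, ‖z k‖
        ≤ ‖z j‖ * ‖τ‖ ^ n :=
          mul_le_mul_of_nonneg_left h2 (norm_nonneg _)
      _ < ‖τ‖ * ‖τ‖ ^ n :=
          mul_lt_mul_of_pos_right (hz j) (pow_pos (norm_pos_iff.mpr hτ) n)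
      _ = ‖τ‖ ^ (n + 1) := by ring
  intro h
  rw [sub_eq_zero] at h
  apply absurd (congrArg (‖·‖) h)
  rw [norm_pow]
  exact ne_of_lt h1

/-- Continuity of `fI` composed with a map avoiding the poles. -/
lemma continuous_fI_comp {X : Type*} [TopologicalSpace X] (l : Fin n → ℕ) (m : Fin n → ℤ)
    (τ : ℂ) (hτ : τ ≠ 0) (u : X → Fin n → ℂ) (hu : Continuous u)
    (h0 : ∀ x j, u x j ≠ 0) (hlt : ∀ x j, ‖u x j‖ < ‖τ‖) :
    Continuous fun x => fI l m τ (u x) := by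
  apply Continuous.div
  · exact continuous_finset_prod _ fun j _ =>
      ((continuous_apply j).comp hu).zpow₀ _ fun x => Or.inl (h0 x j)
  · exact continuous_finset_prod _ fun j _ =>
      ((((continuous_apply j).comp hu).mul
        (continuous_finset_prod _ fun k _ => (continuous_apply k).comp hu)).sub
        continuous_const).pow _
  · intro x
    rw [Finset.prod_ne_zero_iff]
    exact fun j _ => pow_ne_zero _ (abs_lt_den_ne τ hτ (u x) (hlt x) j)

lemma prod_zpow_eq (c : ℂ) (hc : c ≠ 0) (f : Fin n → ℤ) :
    (∏ j, c ^ f j) = c ^ (∑ j, f j) := by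
  classical
  induction (Finset.univ : Finset (Fin n)) using Finset.induction with
  | empty => simp
  | insert _ _ h ih => rw [Finset.prod_insert h, Finset.sum_insert h, zpow_add₀ hc, ih]

/-- The key scaling identity for `fI`. -/
lemma fI_scale (l : Fin n → ℕ) (m : Fin n → ℤ) (τ : ℂ) (c : ℂ) (hc : c ≠ 0) (z : Fin n → ℂ) :
    fI l m (c * τ) (c • z) =
      c ^ ((∑ j, m j) - ((n : ℤ) + 1) * ∑ j, (l j : ℤ)) * fI l m τ z := by
  have hnum : (∏ j, (c • z) j ^ m j) = c ^ (∑ j, m j) * ∏ j, z j ^ m j := by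
    rw [Finset.prod_congr rfl fun j _ => by
      show (c * z j) ^ m j = c ^ m j * z j ^ m j
      exact mul_zpow c (z j) (m j)]
    rw [Finset.prod_mul_distrib, prod_zpow_eq c hc]
  have hden : (∏ j, ((c • z) j * (∏ k, (c • z) k) - (c * τ) ^ (n + 1)) ^ (l j)) =
      c ^ ((n + 1) * ∑ j, l j) * ∏ j, (z j * (∏ k, z k) - τ ^ (n + 1)) ^ (l j) := by
    have hterm : ∀ j : Fin n, ((c • z) j * (∏ k, (c • z) k) - (c * τ) ^ (n + 1)) ^ (l j)
        = (c ^ (n + 1)) ^ l j * (z j * (∏ k, z k) - τ ^ (n + 1)) ^ (l j) := by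
      intro j
      have h1 : (c • z) j * (∏ k, (c • z) k) - (c * τ) ^ (n + 1)
          = c ^ (n + 1) * (z j * (∏ k, z k) - τ ^ (n + 1)) := by
        show c * z j * (∏ k, c * z k) - (c * τ) ^ (n + 1) = _
        rw [Finset.prod_mul_distrib, Finset.prod_const, Finset.card_univ, Fintype.card_fin,
          mul_pow]
        ring
      rw [h1, mul_pow]
    rw [Finset.prod_congr rfl fun j _ => hterm j, Finset.prod_mul_distrib,
      Finset.prod_pow_eq_pow_sum, ← pow_mul]
  have hcast : ((n : ℤ) + 1) * ∑ j, (l j : ℤ) = (((n + 1) * ∑ j, l j : ℕ) : ℤ) := by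
    push_cast; ring
  rw [fI, fI, hnum, hden, mul_div_mul_comm, zpow_sub₀ hc, hcast, zpow_natCast]

/-! ### Properties of `torusMap` -/

lemma torusMap_zero_apply (R : Fin n → ℝ) (θ : Fin n → ℝ) (j : Fin n) :
    torusMap (0 : Fin n → ℂ) R θ j = (R j : ℂ) * Complex.exp (θ j * Complex.I) := by
  simp [torusMap]

lemma abs_torusMap (R : Fin n → ℝ) (θ : Fin n → ℝ) (j : Fin n) :
    ‖torusMap (0 : Fin n → ℂ) R θ j‖ = |R j| := by
  rw [torusMap_zero_apply, norm_mul, Complex.norm_real, Real.norm_eq_abs, Complex.norm_exp_ofReal_mul_I, mul_one]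

lemma torusMap_ne_zero {A : ℝ} (R : Fin n → ℝ) (hR : ∀ j, R j ∈ Ioo 0 A) (θ : Fin n → ℝ)
    (j : Fin n) : torusMap (0 : Fin n → ℂ) R θ j ≠ 0 := by
  rw [torusMap_zero_apply]
  exact mul_ne_zero (by exact_mod_cast (hR j).1.ne') (Complex.exp_ne_zero _)

lemma abs_torusMap_lt {A : ℝ} (R : Fin n → ℝ) (hR : ∀ j, R j ∈ Ioo 0 A) (θ : Fin n → ℝ)
    (j : Fin n) : ‖torusMap (0 : Fin n → ℂ) R θ j‖ < A := by
  rw [abs_torusMap, abs_of_pos (hR j).1]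
  exact (hR j).2

lemma continuous_torusMap (R : Fin n → ℝ) : Continuous (torusMap (0 : Fin n → ℂ) R) := by
  refine continuous_pi fun j => ?_
  simp only [torusMap, Pi.zero_apply, zero_add]
  exact continuous_const.mul (Complex.continuous_exp.comp
    ((Complex.continuous_ofReal.comp (continuous_apply j)).mul continuous_const))

lemma cont_fI_torusMap (l : Fin n → ℕ) (m : Fin n → ℤ) (τ : ℂ) (hτ : τ ≠ 0)
    (R : Fin n → ℝ) (hR : ∀ j, R j ∈ Ioo 0 (‖τ‖)) :
    Continuous fun θ : Fin n → ℝ => fI l m τ (torusMap 0 R θ) :=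
  continuous_fI_comp l m τ hτ _ (continuous_torusMap R)
    (fun θ j => torusMap_ne_zero R hR θ j) (fun θ j => abs_torusMap_lt R hR θ j)

/-! ### Fubini for the torus integral -/

lemma torus_swap {N : ℕ} (f : (Fin (N + 1) → ℂ) → ℂ) (R : Fin (N + 1) → ℝ) (i : Fin (N + 1))
    (hfc : Continuous fun θ : Fin (N + 1) → ℝ => f (torusMap 0 R θ)) :
    (∯ z in T((0 : Fin (N + 1) → ℂ), R), f z) =
      ∫ Θ in Icc (0 : Fin N → ℝ) (fun _ => 2 * Real.pi),
        ((∏ j, ((R (i.succAbove j) : ℂ) * Complex.exp (Θ j * Complex.I) * Complex.I)) *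
          ∮ z in C((0:ℂ), R i),
            f (i.insertNth z (torusMap 0 (R ∘ i.succAbove) Θ))) := by
  have hTI : TorusIntegrable f 0 R :=
    hfc.continuousOn.integrableOn_compact isCompact_Icc
  set e : (ℝ × (Fin N → ℝ)) ≃ᵐ (Fin (N + 1) → ℝ) :=
    (MeasurableEquiv.piFinSuccAbove (fun _ => ℝ) i).symm with he
  have hem : MeasurePreserving e :=
    (volume_preserving_piFinSuccAbove (fun _ : Fin (N + 1) => ℝ) i).symm _
  have heπ : (e ⁻¹' Icc 0 fun _ => 2 * Real.pi) =
      Icc 0 (2 * Real.pi) ×ˢ Icc (0 : Fin N → ℝ) fun _ => 2 * Real.pi :=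
    ((Fin.insertNthOrderIso (fun _ => ℝ) i).preimage_Icc _ _).trans (Icc_prod_eq _ _)
  have hint : Integrable (fun p : ℝ × (Fin N → ℝ) =>
      (∏ k, ((R k : ℂ) * Complex.exp ((e p) k * Complex.I) * Complex.I)) • f (torusMap 0 R (e p)))
      ((volume.restrict (Icc 0 (2 * Real.pi))).prod
        (volume.restrict (Icc (0 : Fin N → ℝ) fun _ => 2 * Real.pi))) := by
    have h2 := hTI.function_integrable
    rw [← hem.integrableOn_comp_preimage e.measurableEmbedding, heπ] at h2
    rwa [Measure.prod_restrict, ← Measure.volume_eq_prod]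
  calc (∯ z in T((0 : Fin (N + 1) → ℂ), R), f z)
      = ∫ p in Icc (0:ℝ) (2 * Real.pi) ×ˢ Icc (0 : Fin N → ℝ) (fun _ => 2 * Real.pi),
          (∏ k, ((R k : ℂ) * Complex.exp ((e p) k * Complex.I) * Complex.I)) •
            f (torusMap 0 R (e p)) := by
        rw [torusIntegral, ← hem.map_eq, setIntegral_map_equiv, heπ]
    _ = ∫ Θ in Icc (0 : Fin N → ℝ) (fun _ => 2 * Real.pi), ∫ θ₀ in Icc (0:ℝ) (2 * Real.pi),
          (∏ k, ((R k : ℂ) * Complex.exp ((e (θ₀, Θ)) k * Complex.I) * Complex.I)) •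
            f (torusMap 0 R (e (θ₀, Θ))) := by
        rw [Measure.volume_eq_prod, ← Measure.prod_restrict]
        exact integral_prod_symm _ hint
    _ = ∫ Θ in Icc (0 : Fin N → ℝ) (fun _ => 2 * Real.pi),
        ((∏ j, ((R (i.succAbove j) : ℂ) * Complex.exp (Θ j * Complex.I) * Complex.I)) *
          ∮ z in C((0:ℂ), R i),
            f (i.insertNth z (torusMap 0 (R ∘ i.succAbove) Θ))) := by
        refine setIntegral_congr_fun measurableSet_Icc fun Θ _ => ?_
        have he1 : ∀ θ₀ : ℝ, e (θ₀, Θ) = i.insertNth θ₀ Θ := fun θ₀ => by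
          simp [he, MeasurableEquiv.piFinSuccAbove_symm_apply, Fin.insertNthEquiv]
        have hmap : ∀ θ₀ : ℝ, torusMap 0 R (i.insertNth θ₀ Θ) =
            i.insertNth (circleMap 0 (R i) θ₀) (torusMap 0 (R ∘ i.succAbove) Θ) := by
          intro θ₀
          rw [funext_iff, i.forall_iff_succAbove]
          constructor
          · simp [torusMap, circleMap, Fin.insertNth_apply_same]
          · intro j
            simp [torusMap, circleMap, Fin.insertNth_apply_succAbove]
        have hsplit : ∀ θ₀ : ℝ,
            (∏ k, ((R k : ℂ) *
              Complex.exp (((i.insertNth θ₀ Θ : Fin (N+1) → ℝ) k) * Complex.I) * Complex.I)) =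
            ((R i : ℂ) * Complex.exp (θ₀ * Complex.I) * Complex.I) *
              ∏ j, ((R (i.succAbove j) : ℂ) * Complex.exp (Θ j * Complex.I) * Complex.I) := by
          intro θ₀
          rw [Fin.prod_univ_succAbove
            (fun k => ((R k : ℂ) *
              Complex.exp (((i.insertNth θ₀ Θ : Fin (N+1) → ℝ) k) * Complex.I) * Complex.I)) i]
          simp [Fin.insertNth_apply_same, Fin.insertNth_apply_succAbove]
        calc (∫ θ₀ in Icc (0:ℝ) (2 * Real.pi),
              (∏ k, ((R k : ℂ) * Complex.exp ((e (θ₀, Θ)) k * Complex.I) * Complex.I)) •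
                f (torusMap 0 R (e (θ₀, Θ))))
            = ∫ θ₀ in Icc (0:ℝ) (2 * Real.pi),
              (∏ j, ((R (i.succAbove j) : ℂ) * Complex.exp (Θ j * Complex.I) * Complex.I)) *
                (deriv (circleMap 0 (R i)) θ₀ •
                  f (i.insertNth (circleMap 0 (R i) θ₀) (torusMap 0 (R ∘ i.succAbove) Θ))) := by
              refine setIntegral_congr_fun measurableSet_Icc fun θ₀ _ => ?_
              rw [he1, hsplit, hmap, deriv_circleMap]
              simp only [smul_eq_mul, circleMap_zero]
              ring
          _ = (∏ j, ((R (i.succAbove j) : ℂ) * Complex.exp (Θ j * Complex.I) * Complex.I)) *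
              ∮ z in C((0:ℂ), R i),
                f (i.insertNth z (torusMap 0 (R ∘ i.succAbove) Θ)) := by
              rw [MeasureTheory.integral_const_mul, circleIntegral_def_Icc]

lemma skeleton {N : ℕ} (f g : (Fin (N + 1) → ℂ) → ℂ) (R R' : Fin (N + 1) → ℝ) (i : Fin (N + 1))
    (hRR' : ∀ j, R (i.succAbove j) = R' (i.succAbove j))
    (hfc : Continuous fun θ : Fin (N + 1) → ℝ => f (torusMap 0 R θ))
    (hgc : Continuous fun θ : Fin (N + 1) → ℝ => g (torusMap 0 R' θ))
    (hkey : ∀ Θ : Fin N → ℝ,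
      (∮ z in C((0:ℂ), R i), f (i.insertNth z (torusMap 0 (R ∘ i.succAbove) Θ))) =
      ∮ z in C((0:ℂ), R' i), g (i.insertNth z (torusMap 0 (R' ∘ i.succAbove) Θ))) :
    (∯ z in T((0 : Fin (N + 1) → ℂ), R), f z) = ∯ z in T((0 : Fin (N + 1) → ℂ), R'), g z := by
  rw [torus_swap f R i hfc, torus_swap g R' i hgc]
  refine setIntegral_congr_fun measurableSet_Icc fun Θ _ => ?_
  rw [hkey Θ]
  congr 1
  exact Finset.prod_congr rfl fun j _ => by rw [hRR' j]

/-! ### Differentiability in one coordinate, and radius independence -/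

lemma fI_insert_differentiableAt {N : ℕ} (l : Fin (N + 1) → ℕ) (m : Fin (N + 1) → ℤ)
    (τ : ℂ) (hτ : τ ≠ 0) (i : Fin (N + 1)) (y : Fin N → ℂ) (hy0 : ∀ j, y j ≠ 0)
    (hylt : ∀ j, ‖y j‖ < ‖τ‖) {z : ℂ} (hz0 : z ≠ 0)
    (hzlt : ‖z‖ < ‖τ‖) :
    DifferentiableAt ℂ (fun w => fI l m τ (i.insertNth w y)) z := by
  have hdiff : ∀ k : Fin (N + 1),
      DifferentiableAt ℂ (fun w => (i.insertNth w y : Fin (N + 1) → ℂ) k) z := by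
    rw [i.forall_iff_succAbove]
    refine ⟨?_, fun j => ?_⟩
    · simp only [Fin.insertNth_apply_same]
      exact differentiableAt_id
    · simp only [Fin.insertNth_apply_succAbove]
      exact differentiableAt_const _
  have h0 : ∀ k : Fin (N + 1), (i.insertNth z y : Fin (N + 1) → ℂ) k ≠ 0 := by
    rw [i.forall_iff_succAbove]
    refine ⟨?_, fun j => ?_⟩
    · simpa only [Fin.insertNth_apply_same] using hz0
    · simpa only [Fin.insertNth_apply_succAbove] using hy0 j
  have hlt : ∀ k : Fin (N + 1),
      ‖(i.insertNth z y : Fin (N + 1) → ℂ) k‖ < ‖τ‖ := by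
    rw [i.forall_iff_succAbove]
    refine ⟨?_, fun j => ?_⟩
    · simpa only [Fin.insertNth_apply_same] using hzlt
    · simpa only [Fin.insertNth_apply_succAbove] using hylt j
  apply DifferentiableAt.div
  · exact DifferentiableAt.fun_finsetProd fun k _ => (hdiff k).zpow (Or.inl (h0 k))
  · refine DifferentiableAt.fun_finsetProd fun k _ => DifferentiableAt.pow ?_ _
    exact ((hdiff k).mul (DifferentiableAt.fun_finsetProd fun k' _ => hdiff k')).sub
      (differentiableAt_const _)
  · rw [Finset.prod_ne_zero_iff]
    exact fun k _ => pow_ne_zero _ (abs_lt_den_ne τ hτ _ hlt k)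

lemma circle_slice_eq_of_le {N : ℕ} (l : Fin (N + 1) → ℕ) (m : Fin (N + 1) → ℤ)
    (τ : ℂ) (hτ : τ ≠ 0) (i : Fin (N + 1)) (y : Fin N → ℂ) (hy0 : ∀ j, y j ≠ 0)
    (hylt : ∀ j, ‖y j‖ < ‖τ‖) {r r' : ℝ}
    (h0 : 0 < r') (hle : r' ≤ r) (hlt : r < ‖τ‖) :
    (∮ z in C((0:ℂ), r), fI l m τ (i.insertNth z y)) =
      ∮ z in C((0:ℂ), r'), fI l m τ (i.insertNth z y) := by
  have hgood : ∀ z : ℂ, z ∈ Metric.closedBall (0:ℂ) r \ Metric.ball (0:ℂ) r' →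
      DifferentiableAt ℂ (fun w => fI l m τ (i.insertNth w y)) z := by
    rintro z ⟨hz1, hz2⟩
    rw [Metric.mem_closedBall, dist_zero_right] at hz1
    rw [Metric.mem_ball, dist_zero_right, not_lt] at hz2
    have hz0 : z ≠ 0 := by
      intro h; rw [h] at hz2; simp at hz2; linarith
    exact fI_insert_differentiableAt l m τ hτ i y hy0 hylt hz0 (lt_of_le_of_lt hz1 hlt)
  exact circleIntegral_eq_of_differentiable_on_annulus_off_countable h0 hle
    Set.countable_empty (fun z hz => (hgood z hz).continuousAt.continuousWithinAt)
    (fun z hz => hgood z ⟨Metric.ball_subset_closedBall hz.1.1, fun h => hz.1.2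
      (Metric.ball_subset_closedBall h)⟩)

lemma rad_step {N : ℕ} (l : Fin (N + 1) → ℕ) (m : Fin (N + 1) → ℤ) (τ : ℂ) (hτ : τ ≠ 0)
    (R R' : Fin (N + 1) → ℝ) (i : Fin (N + 1))
    (hRR' : ∀ j, R (i.succAbove j) = R' (i.succAbove j))
    (hR : ∀ j, R j ∈ Ioo 0 (‖τ‖)) (hR' : ∀ j, R' j ∈ Ioo 0 (‖τ‖)) :
    (∯ z in T((0 : Fin (N + 1) → ℂ), R), fI l m τ z) =
      ∯ z in T((0 : Fin (N + 1) → ℂ), R'), fI l m τ z := by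
  refine skeleton _ _ R R' i hRR' (cont_fI_torusMap l m τ hτ R hR)
    (cont_fI_torusMap l m τ hτ R' hR') fun Θ => ?_
  have hyeq : torusMap 0 (R' ∘ i.succAbove) Θ = torusMap (0 : Fin N → ℂ) (R ∘ i.succAbove) Θ := by
    rw [show R' ∘ i.succAbove = R ∘ i.succAbove from funext fun j => (hRR' j).symm]
  rw [hyeq]
  set y := torusMap (0 : Fin N → ℂ) (R ∘ i.succAbove) Θ with hy
  have hRsucc : ∀ j, (R ∘ i.succAbove) j ∈ Ioo 0 (‖τ‖) := fun j => hR _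
  have hy0 : ∀ j, y j ≠ 0 := fun j => torusMap_ne_zero _ hRsucc Θ j
  have hylt : ∀ j, ‖y j‖ < ‖τ‖ := fun j => abs_torusMap_lt _ hRsucc Θ j
  rcases le_total (R' i) (R i) with h | h
  · exact circle_slice_eq_of_le l m τ hτ i y hy0 hylt (hR' i).1 h (hR i).2
  · exact (circle_slice_eq_of_le l m τ hτ i y hy0 hylt (hR i).1 h (hR' i).2).symm

lemma rad_all {N : ℕ} (l : Fin (N + 1) → ℕ) (m : Fin (N + 1) → ℤ) (τ : ℂ) (hτ : τ ≠ 0)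
    (R R' : Fin (N + 1) → ℝ)
    (hR : ∀ j, R j ∈ Ioo 0 (‖τ‖)) (hR' : ∀ j, R' j ∈ Ioo 0 (‖τ‖)) :
    (∯ z in T((0 : Fin (N + 1) → ℂ), R), fI l m τ z) =
      ∯ z in T((0 : Fin (N + 1) → ℂ), R'), fI l m τ z := by
  let mix : ℕ → Fin (N + 1) → ℝ := fun t j => if (j : ℕ) < t then R' j else R j
  have hmix : ∀ t j, mix t j ∈ Ioo 0 (‖τ‖) := by
    intro t j
    by_cases h : (j : ℕ) < t
    · simpa [mix, h] using hR' j
    · simpa [mix, h] using hR j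
  have key : ∀ t, t ≤ N + 1 →
      (∯ z in T((0 : Fin (N + 1) → ℂ), mix t), fI l m τ z) =
        ∯ z in T((0 : Fin (N + 1) → ℂ), R), fI l m τ z := by
    intro t
    induction t with
    | zero =>
      intro _
      have : mix 0 = R := funext fun j => by simp [mix]
      rw [this]
    | succ t ih =>
      intro ht
      have hlt : t < N + 1 := ht
      set i : Fin (N + 1) := ⟨t, hlt⟩ with hi
      have hstep : (∯ z in T((0 : Fin (N + 1) → ℂ), mix (t + 1)), fI l m τ z) =
          ∯ z in T((0 : Fin (N + 1) → ℂ), mix t), fI l m τ z := by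
        refine rad_step l m τ hτ _ _ i (fun j => ?_) (hmix _) (hmix _)
        have hne : ((i.succAbove j : Fin (N + 1)) : ℕ) ≠ t :=
          fun h => i.succAbove_ne j (Fin.ext h)
        simp only [mix]
        by_cases h : ((i.succAbove j : Fin (N + 1)) : ℕ) < t
        · rw [if_pos (Nat.lt_succ_of_lt h), if_pos h]
        · rw [if_neg (by omega), if_neg h]
      rw [hstep, ih (Nat.le_of_succ_le ht)]
  have h1 := key (N + 1) le_rfl
  have h2 : mix (N + 1) = R' := funext fun j => by simp [mix, j.isLt]
  rw [h2] at h1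
  exact h1.symm

/-! ### Rotation -/

lemma rot_all {N : ℕ} (l : Fin (N + 1) → ℕ) (m : Fin (N + 1) → ℤ) (τ : ℂ) (hτ : τ ≠ 0)
    (R : Fin (N + 1) → ℝ) (hR : ∀ j, R j ∈ Ioo 0 (‖τ‖)) (d : ℂ)
    (hd : ‖d‖ = 1) :
    d ^ (N + 1) * (∯ z in T((0 : Fin (N + 1) → ℂ), R), fI l m τ (d • z)) =
      ∯ z in T((0 : Fin (N + 1) → ℂ), R), fI l m τ z := by
  have hd0 : d ≠ 0 := by
    intro h; rw [h] at hd; simp at hd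
  set ct : ℕ → Fin (N + 1) → ℂ := fun t j => if (j : ℕ) < t then d else 1 with hct
  set g : ℕ → (Fin (N + 1) → ℂ) → ℂ :=
    fun t z => d ^ t * fI l m τ (fun j => ct t j * z j) with hg
  have habs_ct : ∀ t j, ‖ct t j‖ = 1 := by
    intro t j
    by_cases h : (j : ℕ) < t <;> simp [hct, h, hd]
  have hct0 : ∀ t j, ct t j ≠ 0 := by
    intro t j
    by_cases h : (j : ℕ) < t <;> simp [hct, h, hd0]
  have hcont : ∀ t, Continuous fun θ : Fin (N + 1) → ℝ => g t (torusMap 0 R θ) := by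
    intro t
    apply continuous_const.mul
    refine continuous_fI_comp l m τ hτ (fun θ j => ct t j * torusMap 0 R θ j) ?_ ?_ ?_
    · exact continuous_pi fun j =>
        continuous_const.mul ((continuous_apply j).comp (continuous_torusMap R))
    · exact fun θ j => mul_ne_zero (hct0 t j) (torusMap_ne_zero R hR θ j)
    · intro θ j
      rw [norm_mul, habs_ct, one_mul]
      exact abs_torusMap_lt R hR θ j
  have key : ∀ t, t ≤ N + 1 →
      (∯ z in T((0 : Fin (N + 1) → ℂ), R), g t z) =
        ∯ z in T((0 : Fin (N + 1) → ℂ), R), g 0 z := by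
    intro t
    induction t with
    | zero => intro _; rfl
    | succ t ih =>
      intro ht
      have hlt : t < N + 1 := ht
      set i : Fin (N + 1) := ⟨t, hlt⟩ with hi
      have hstep : (∯ z in T((0 : Fin (N + 1) → ℂ), R), g (t + 1) z) =
          ∯ z in T((0 : Fin (N + 1) → ℂ), R), g t z := by
        refine skeleton (g (t + 1)) (g t) R R i (fun j => rfl) (hcont _) (hcont _) fun Θ => ?_
        set y := torusMap (0 : Fin N → ℂ) (R ∘ i.succAbove) Θ with hy
        have hins : ∀ z : ℂ, (fun j => ct (t + 1) j * (i.insertNth z y : Fin (N+1) → ℂ) j) =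
            (fun j => ct t j * (i.insertNth (d * z) y : Fin (N+1) → ℂ) j) := by
          intro z
          funext k
          by_cases hk : k = i
          · subst hk
            simp only [Fin.insertNth_apply_same, hct]
            have h1 : (i : ℕ) < t + 1 := by rw [hi]; exact Nat.lt_succ_self t
            have h2 : ¬ ((i : ℕ) < t) := by rw [hi]; exact lt_irrefl t
            rw [if_pos h1, if_neg h2, one_mul]
          · obtain ⟨j, rfl⟩ := Fin.exists_succAbove_eq hk
            have hne : ((i.succAbove j : Fin (N + 1)) : ℕ) ≠ t :=
              fun h => i.succAbove_ne j (Fin.ext h)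
            simp only [Fin.insertNth_apply_succAbove, hct]
            by_cases h : ((i.succAbove j : Fin (N + 1)) : ℕ) < t
            · rw [if_pos (Nat.lt_succ_of_lt h), if_pos h]
            · rw [if_neg (by omega), if_neg h]
        calc (∮ z in C((0:ℂ), R i), g (t + 1) (i.insertNth z y))
            = ∮ z in C((0:ℂ), R i), d * (g t (i.insertNth (d * z) y)) := by
              have heq : (fun z : ℂ => g (t + 1) (i.insertNth z y)) =
                  fun z : ℂ => d * (g t (i.insertNth (d * z) y)) := by
                funext z
                simp only [hg]
                rw [hins z, pow_succ]
                ring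
              rw [heq]
          _ = ∮ z in C((0:ℂ), R i), g t (i.insertNth z y) :=
              circleIntegral_rotate (fun w => g t (i.insertNth w y)) (R i) d hd
      rw [hstep, ih (Nat.le_of_succ_le ht)]
  have h1 := key (N + 1) le_rfl
  have hgtop : g (N + 1) = fun z => d ^ (N + 1) * fI l m τ (d • z) := by
    funext z
    simp only [hg]
    rw [show (fun j => ct (N + 1) j * z j) = d • z from funext fun j => by
      simp only [hct, if_pos j.isLt, Pi.smul_apply, smul_eq_mul]]
  have hgzero : g 0 = fI l m τ := by
    funext z
    simp [hg, hct]
  rw [hgtop, hgzero] at h1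
  rw [← torusIntegral_const_mul (d ^ (N + 1)) (fun z => fI l m τ (d • z)) _ _]
  exact h1

/-! ### Scaling by a positive real -/

lemma scale_pos (l : Fin n → ℕ) (m : Fin n → ℤ) (τ : ℂ) (s : ℝ) (hs : 0 < s)
    (R : Fin n → ℝ) :
    (∯ z in T((0 : Fin n → ℂ), fun j => s * R j), fI l m ((s : ℂ) * τ) z) =
      (s : ℂ) ^ ((n : ℤ) + (∑ j, m j) - ((n : ℤ) + 1) * ∑ j, (l j : ℤ)) *
        ∯ z in T((0 : Fin n → ℂ), R), fI l m τ z := by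
  have hs0 : (s : ℂ) ≠ 0 := by exact_mod_cast hs.ne'
  rw [torusIntegral, torusIntegral, ← MeasureTheory.integral_const_mul]
  refine setIntegral_congr_fun measurableSet_Icc fun θ _ => ?_
  have hmap : torusMap (0 : Fin n → ℂ) (fun j => s * R j) θ = (s : ℂ) • torusMap 0 R θ := by
    funext j
    simp only [torusMap, Pi.zero_apply, zero_add, Pi.smul_apply, smul_eq_mul]
    push_cast
    ring
  rw [hmap, fI_scale l m τ (s : ℂ) hs0]
  have hprod : (∏ i, ((s * R i : ℝ) : ℂ) * Complex.exp (θ i * Complex.I) * Complex.I) =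
      (s : ℂ) ^ (n : ℕ) * ∏ i, ((R i : ℝ) : ℂ) * Complex.exp (θ i * Complex.I) * Complex.I := by
    rw [show (fun i => ((s * R i : ℝ) : ℂ) * Complex.exp (θ i * Complex.I) * Complex.I) =
        fun i => (s : ℂ) * (((R i : ℝ) : ℂ) * Complex.exp (θ i * Complex.I) * Complex.I) from
      funext fun i => by push_cast; ring]
    rw [Finset.prod_mul_distrib, Finset.prod_const, Finset.card_univ, Fintype.card_fin]
  have hE : (s : ℂ) ^ ((n : ℤ) + (∑ j, m j) - ((n : ℤ) + 1) * ∑ j, (l j : ℤ)) =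
      (s : ℂ) ^ (n : ℕ) * (s : ℂ) ^ ((∑ j, m j) - ((n : ℤ) + 1) * ∑ j, (l j : ℤ)) := by
    rw [← zpow_natCast (s : ℂ) n, ← zpow_add₀ hs0]
    congr 1
    ring
  simp only [smul_eq_mul]
  rw [hprod, hE]
  ring

/-! ### Rotation of the parameter τ -/

lemma rot_tau {N : ℕ} (l : Fin (N + 1) → ℕ) (m : Fin (N + 1) → ℤ) (σ : ℂ) (hσ : σ ≠ 0)
    (u : ℂ) (hu : ‖u‖ = 1) (R : Fin (N + 1) → ℝ)
    (hR : ∀ j, R j ∈ Ioo 0 (‖σ‖)) :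
    (∯ z in T((0 : Fin (N + 1) → ℂ), R), fI l m (u * σ) z) =
      u ^ (((N + 1 : ℕ) : ℤ) + (∑ j, m j) - (((N + 1 : ℕ) : ℤ) + 1) * ∑ j, (l j : ℤ)) *
        ∯ z in T((0 : Fin (N + 1) → ℂ), R), fI l m σ z := by
  have hu0 : u ≠ 0 := by
    intro h; rw [h] at hu; simp at hu
  have hinv : ‖u⁻¹‖ = 1 := by rw [norm_inv, hu]; norm_num
  have h1 : ∀ z : Fin (N + 1) → ℂ, fI l m (u * σ) z =
      u ^ ((∑ j, m j) - (((N + 1 : ℕ) : ℤ) + 1) * ∑ j, (l j : ℤ)) * fI l m σ (u⁻¹ • z) := by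
    intro z
    have := fI_scale l m σ u hu0 (u⁻¹ • z)
    rw [smul_smul, mul_inv_cancel₀ hu0, one_smul] at this
    exact this
  have h2 : (∯ z in T((0 : Fin (N + 1) → ℂ), R), fI l m (u * σ) z) =
      u ^ ((∑ j, m j) - (((N + 1 : ℕ) : ℤ) + 1) * ∑ j, (l j : ℤ)) *
        ∯ z in T((0 : Fin (N + 1) → ℂ), R), fI l m σ (u⁻¹ • z) := by
    rw [show (fun z => fI l m (u * σ) z) = fun z =>
        u ^ ((∑ j, m j) - (((N + 1 : ℕ) : ℤ) + 1) * ∑ j, (l j : ℤ)) * fI l m σ (u⁻¹ • z) from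
      funext h1]
    exact torusIntegral_const_mul _ _ _ _
  have h3 := rot_all l m σ hσ R hR u⁻¹ hinv
  have h4 : (∯ z in T((0 : Fin (N + 1) → ℂ), R), fI l m σ (u⁻¹ • z)) =
      u ^ (N + 1) * ∯ z in T((0 : Fin (N + 1) → ℂ), R), fI l m σ z := by
    have h5 := congrArg (fun w => u ^ (N + 1) * w) h3
    rw [← mul_assoc, ← mul_pow, mul_inv_cancel₀ hu0, one_pow, one_mul] at h5
    exact h5
  rw [h2, h4, ← mul_assoc]
  congr 1
  rw [← zpow_natCast u (N + 1), ← zpow_add₀ hu0]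
  congr 1
  push_cast
  ring

end

end Res4

open Res4 Set in
/-- (Lemma `lm:residue4` of the paper, as a torus integral.)
With `L = ∑ l_j`, `m_j < 0`, and `E = n + ∑ m_j − (n+1)L`, there is a constant `K ∈ ℂ`
such that for all `τ ≠ 0` and `0 < ρ < |τ|`,
`(2πi)^{−n} ∯_{|z_j|=ρ} ∏ z_j^{m_j} / ∏ (z_j ∏ z_k − τ^{n+1})^{l_j} dz = K·τ^E`,
i.e. the residue at `0` of `g_m` is a fixed constant times
`T^{−L+(n+∑m_j)/(n+1)}` with `T = τ^{n+1}`. -/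
theorem residue_at_zero_power (n : ℕ) (hn : 1 ≤ n)
    (l : Fin n → ℕ) (hl : ∀ j, 1 ≤ l j) (m : Fin n → ℤ) (hm : ∀ j, m j < 0) :
    ∃ K : ℂ, ∀ (τ : ℂ) (ρ : ℝ), τ ≠ 0 → 0 < ρ → ρ < ‖τ‖ →
      (2 * (Real.pi : ℂ) * Complex.I)⁻¹ ^ n *
        (∯ z in T((0 : Fin n → ℂ), fun _ => ρ),
          (∏ j, z j ^ (m j)) /
            (∏ j, (z j * (∏ k, z k) - τ ^ (n + 1)) ^ (l j))) =
      K * τ ^ ((n : ℤ) + (∑ j, m j) - ((n : ℤ) + 1) * ∑ j, (l j : ℤ)) := by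
  obtain ⟨N, rfl⟩ : ∃ N, n = N + 1 := ⟨n - 1, (Nat.succ_pred_eq_of_pos hn).symm⟩
  refine ⟨(2 * (Real.pi : ℂ) * Complex.I)⁻¹ ^ (N + 1) *
    (∯ z in T((0 : Fin (N + 1) → ℂ), fun _ => (1 / 2 : ℝ)), fI l m 1 z), ?_⟩
  intro τ ρ hτ hρ hρτ
  set E : ℤ := ((N + 1 : ℕ) : ℤ) + (∑ j, m j) - (((N + 1 : ℕ) : ℤ) + 1) * ∑ j, (l j : ℤ) with hE
  set s : ℝ := ‖τ‖ with hs
  have hspos : 0 < s := by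
    rw [hs]; exact norm_pos_iff.mpr hτ
  have hs0 : (s : ℂ) ≠ 0 := by exact_mod_cast hspos.ne'
  set u : ℂ := τ / (s : ℂ) with hu
  have hu1 : ‖u‖ = 1 := by
    rw [hu, norm_div, Complex.norm_real, Real.norm_eq_abs, ← hs, abs_of_pos hspos, div_self hspos.ne']
  have hu0 : u ≠ 0 := by
    intro h; rw [h] at hu1; simp at hu1
  have hτeq : τ = u * (s : ℂ) := by
    rw [hu, div_mul_cancel₀ _ hs0]
  have habs_s : ‖(s : ℂ)‖ = s := by
    rw [Complex.norm_real, Real.norm_eq_abs, abs_of_pos hspos]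
  -- step 1 : radius independence
  have hstep1 : (∯ z in T((0 : Fin (N + 1) → ℂ), fun _ => ρ), fI l m τ z) =
      ∯ z in T((0 : Fin (N + 1) → ℂ), fun _ => s / 2), fI l m τ z :=
    rad_all l m τ hτ _ _ (fun j => ⟨hρ, hρτ⟩)
      (fun j => ⟨half_pos hspos, by rw [← hs]; linarith⟩)
  -- step 2 : rotation of τ
  have hstep2 : (∯ z in T((0 : Fin (N + 1) → ℂ), fun _ => s / 2), fI l m τ z) =
      u ^ E * ∯ z in T((0 : Fin (N + 1) → ℂ), fun _ => s / 2), fI l m ((s : ℂ)) z := by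
    have h := rot_tau l m ((s : ℂ)) hs0 u hu1 (fun _ => s / 2)
      (fun j => by rw [habs_s]; exact ⟨half_pos hspos, by linarith⟩)
    rw [← hτeq, ← hE] at h
    exact h
  -- step 3 : scaling
  have hstep3 : (∯ z in T((0 : Fin (N + 1) → ℂ), fun _ => s / 2), fI l m ((s : ℂ)) z) =
      (s : ℂ) ^ E * ∯ z in T((0 : Fin (N + 1) → ℂ), fun _ => (1 / 2 : ℝ)), fI l m 1 z := by
    have h := scale_pos l m 1 s hspos (fun _ => (1 / 2 : ℝ))
    rw [mul_one, ← hE] at h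
    have hrad : (fun _ : Fin (N + 1) => s / 2) = fun _ : Fin (N + 1) => s * (1 / 2 : ℝ) :=
      funext fun _ => by ring
    rw [hrad]
    exact h
  have hpow : u ^ E * (s : ℂ) ^ E = τ ^ E := by
    rw [← mul_zpow, ← hτeq]
  have hgoal : (∯ z in T((0 : Fin (N + 1) → ℂ), fun _ => ρ),
      (∏ j, z j ^ (m j)) / (∏ j, (z j * (∏ k, z k) - τ ^ (N + 1 + 1)) ^ (l j))) =
      ∯ z in T((0 : Fin (N + 1) → ℂ), fun _ => ρ), fI l m τ z := rfl
  rw [hgoal, hstep1, hstep2, hstep3]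
  rw [← mul_assoc (u ^ E), hpow]
  ring
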